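/- Let $n_0, n_1 \ge 0$ be integers, $\alpha\in(0,1)$, and suppose $\alpha > \frac{n_0}{n_0+n_1+1}$. Let $V_1,\ldots,V_{n_1}$ be i.i.d. continuous random variables and $V_{n_1+1},\ldots,V_{n_1+n_0}$ all equal to $0$ with $V_i > 0$ almost surely for $i\le n_1$, and let $V_{new}$ be another independent copy of the continuous distribution of $V_1$. Then $\mathbb{P}\Big(V_{new} \le Q\big(\alpha; \tfrac{1}{n_0+n_1+1}(\sum_{i=1}^{n_0+n_1}\delta_{V_i} + \delta_\infty)\big)\Big) = \frac{\lceil (n_0+n_1+1)\alpha\rceil - n_0}{n_1+1} \le \frac{1}{n_1+1} + \frac{n_0+n_1+1}{n_1+1}\Big(\alpha - \frac{n_0}{n_0+n_1+1}\Big).$ -/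

import Mathlib

open Finset MeasureTheory ProbabilityTheory
open scoped ENNReal

noncomputable def equantile {m : ℕ} (w : Fin m → ℝ) (V : Fin m → EReal) (α : ℝ) : EReal :=
  sInf {t : EReal | α ≤ ∑ i, if V i ≤ t then w i else 0}

lemma cardZ (n0 n1 : ℕ) :
    (univ.filter fun j : Fin (n1 + n0 + 1) => n1 ≤ (j : ℕ) ∧ (j : ℕ) < n1 + n0).card = n0 := by
  have : (univ.filter fun j : Fin (n1 + n0 + 1) => n1 ≤ (j : ℕ) ∧ (j : ℕ) < n1 + n0).card
      = (univ : Finset (Fin n0)).card :=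
    Finset.card_bij' (fun j hj => (⟨(j : ℕ) - n1, by
        have := (mem_filter.mp hj).2; omega⟩ : Fin n0))
      (fun a _ => (⟨n1 + (a : ℕ), by omega⟩ : Fin (n1 + n0 + 1)))
      (fun a _ => mem_univ _)
      (fun a _ => by simp only [mem_filter, mem_univ, true_and]; constructor <;> simp
        <;> omega)
      (fun a ha => by
        have := (mem_filter.mp ha).2
        apply Fin.ext; simp; omega)
      (fun a _ => by apply Fin.ext; simp)
  simpa using this


lemma claimA (n0 n1 : ℕ) (α : ℝ) (hα1 : α < 1)
    (hαlb : (n0 : ℝ) / ((n0 : ℝ) + n1 + 1) < α)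
    (u : Fin (n1 + 1) → ℝ) (hpos : ∀ i, 0 < u i) (hinj : Function.Injective u) :
    ((u (Fin.last n1) : EReal) ≤
        equantile (fun _ : Fin (n1 + n0 + 1) => 1 / ((n0 : ℝ) + n1 + 1))
          (fun j : Fin (n1 + n0 + 1) =>
            if hj : (j : ℕ) < n1 then ((u ⟨j, Nat.lt_succ_of_lt hj⟩ : ℝ) : EReal)
            else if (j : ℕ) < n1 + n0 then ((0 : ℝ) : EReal) else (⊤ : EReal)) α)
      ↔ (univ.filter fun i : Fin (n1 + 1) => u i < u (Fin.last n1)).card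
          < (⌈((n0 : ℝ) + n1 + 1) * α⌉).toNat - n0 := by
  set N : ℝ := (n0 : ℝ) + n1 + 1 with hNdef
  have hN : (0 : ℝ) < N := by positivity
  have hNα : (n0 : ℝ) < N * α := by
    rw [div_lt_iff₀ hN] at hαlb; linarith
  have hceil_ge : (n0 : ℤ) + 1 ≤ ⌈N * α⌉ := by
    have := Int.lt_ceil.mpr (show ((n0 : ℤ) : ℝ) < N * α by exact_mod_cast hNα)
    omega
  have hceil_le : ⌈N * α⌉ ≤ (n0 : ℤ) + n1 + 1 := by
    apply Int.ceil_le.mpr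
    push_cast
    nlinarith
  set m : ℕ := (⌈N * α⌉).toNat with hmdef
  have hm : (m : ℤ) = ⌈N * α⌉ := Int.toNat_of_nonneg (by omega)
  have hm1 : n0 + 1 ≤ m := by omega
  have hm2 : m ≤ n0 + n1 + 1 := by omega
  have hlast_ne : ∀ i : Fin (n1 + 1), i ≠ Fin.last n1 → (i : ℕ) < n1 := by
    intro i hi
    have := i.isLt
    by_contra hc
    exact hi (Fin.ext (by rw [Fin.val_last]; omega))
  set V : Fin (n1 + n0 + 1) → EReal := fun j =>
      if hj : (j : ℕ) < n1 then ((u ⟨j, Nat.lt_succ_of_lt hj⟩ : ℝ) : EReal)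
      else if (j : ℕ) < n1 + n0 then ((0 : ℝ) : EReal) else (⊤ : EReal) with hVdef
  have hVpos : ∀ (j : Fin (n1 + n0 + 1)) (h : (j : ℕ) < n1),
      V j = ((u ⟨(j : ℕ), by omega⟩ : ℝ) : EReal) := by
    intro j h
    rw [hVdef]
    exact dif_pos h
  have hVzero : ∀ (j : Fin (n1 + n0 + 1)), n1 ≤ (j : ℕ) → (j : ℕ) < n1 + n0 →
      V j = ((0 : ℝ) : EReal) := by
    intro j h1 h2
    rw [hVdef]
    simp only
    rw [dif_neg (by omega), if_pos h2]
  have hVtop : ∀ (j : Fin (n1 + n0 + 1)), n1 + n0 ≤ (j : ℕ) → V j = ⊤ := by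
    intro j h1
    rw [hVdef]
    simp only
    rw [dif_neg (by omega), if_neg (by omega)]
  set C : Finset (Fin (n1 + 1)) := univ.filter fun i => u i < u (Fin.last n1) with hCdef
  set Z : Finset (Fin (n1 + n0 + 1)) :=
      univ.filter fun j => n1 ≤ (j : ℕ) ∧ (j : ℕ) < n1 + n0 with hZdef
  have hZcard : Z.card = n0 := cardZ n0 n1
  have hcle : n1 + 1 ≤ n1 + n0 + 1 := by omega
  have hcount : ∀ t : EReal,
      (α ≤ ∑ j, if V j ≤ t then 1 / N else 0) ↔
        m ≤ (univ.filter fun j => V j ≤ t).card := by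
    intro t
    have hsum : (∑ j, if V j ≤ t then 1 / N else 0)
        = ((univ.filter fun j => V j ≤ t).card : ℝ) * (1 / N) := by
      rw [← Finset.sum_boole (fun j => V j ≤ t) univ, Finset.sum_mul]
      apply Finset.sum_congr rfl
      intro j _
      split <;> ring
    rw [hsum, mul_one_div, le_div_iff₀ hN]
    constructor
    · intro h
      have : ⌈N * α⌉ ≤ (((univ.filter fun j => V j ≤ t).card : ℕ) : ℤ) :=
        Int.ceil_le.mpr (by push_cast; linarith)
      omega
    · intro h
      have h2 : ⌈N * α⌉ ≤ (((univ.filter fun j => V j ≤ t).card : ℕ) : ℤ) := by omega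
      have := Int.ceil_le.mp h2
      push_cast at this
      linarith
  constructor
  · intro hle
    by_contra hnot
    push_neg at hnot
    have hkC : m - n0 ≤ C.card := hnot
    have hCne : C.Nonempty := card_pos.mp (by omega)
    obtain ⟨i0, hi0C⟩ := hCne
    obtain ⟨i1, hi1C, hmax⟩ := Finset.exists_max_image C u ⟨i0, hi0C⟩
    have ht0lt : u i1 < u (Fin.last n1) := (mem_filter.mp hi1C).2
    have ht0pos : 0 < u i1 := hpos i1
    have hmemS : α ≤ ∑ j, if V j ≤ ((u i1 : ℝ) : EReal) then 1 / N else 0 := by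
      apply (hcount _).mpr
      set P : Finset (Fin (n1 + n0 + 1)) := C.image (Fin.castLE hcle) with hPdef
      have hPcard : P.card = C.card :=
        Finset.card_image_of_injective _ (Fin.castLE_injective _)
      have hdisj : Disjoint Z P := by
        rw [Finset.disjoint_left]
        intro j hjZ hjP
        obtain ⟨i, hiC, rfl⟩ := mem_image.mp hjP
        have hine : i ≠ Fin.last n1 := by
          intro h; rw [h] at hiC
          exact lt_irrefl _ (mem_filter.mp hiC).2
        have h1 : (i : ℕ) < n1 := hlast_ne i hine
        have h2 := (mem_filter.mp hjZ).2.1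
        simp only [Fin.coe_castLE] at h2
        omega
      have hsub : Z ∪ P ⊆ univ.filter fun j => V j ≤ ((u i1 : ℝ) : EReal) := by
        intro j hj
        rcases mem_union.mp hj with hjZ | hjP
        · obtain ⟨-, h1, h2⟩ := mem_filter.mp hjZ
          refine mem_filter.mpr ⟨mem_univ _, ?_⟩
          exact le_of_eq_of_le (hVzero j h1 h2)
            (EReal.coe_le_coe_iff.mpr ht0pos.le)
        · obtain ⟨i, hiC, rfl⟩ := mem_image.mp hjP
          have hine : i ≠ Fin.last n1 := by
            intro h; rw [h] at hiC
            exact lt_irrefl _ (mem_filter.mp hiC).2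
          have hilt : ((Fin.castLE hcle i : Fin (n1 + n0 + 1)) : ℕ) < n1 :=
            hlast_ne i hine
          refine mem_filter.mpr ⟨mem_univ _, ?_⟩
          exact le_of_eq_of_le (hVpos _ hilt)
            (EReal.coe_le_coe_iff.mpr (hmax i hiC))
      have hc := Finset.card_le_card hsub
      rw [Finset.card_union_of_disjoint hdisj, hZcard, hPcard] at hc
      omega
    have h1 : equantile (fun _ : Fin (n1 + n0 + 1) => 1 / N) V α ≤ ((u i1 : ℝ) : EReal) :=
      sInf_le hmemS
    have h2 : ((u (Fin.last n1) : ℝ) : EReal) ≤ ((u i1 : ℝ) : EReal) := hle.trans h1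
    exact absurd (EReal.coe_le_coe_iff.mp h2) (not_le.mpr ht0lt)
  · intro hlt
    apply le_sInf
    intro t ht
    have hF : m ≤ (univ.filter fun j => V j ≤ t).card := (hcount t).mp ht
    by_contra hnot
    have ht' : t < ((u (Fin.last n1) : ℝ) : EReal) := not_le.mp hnot
    have hFsub : (univ.filter fun j => V j ≤ t) ⊆ Z ∪ C.image (Fin.castLE hcle) := by
      intro j hj
      have hVj : V j ≤ t := (mem_filter.mp hj).2
      rcases lt_or_ge (j : ℕ) n1 with h1 | h1
      · refine mem_union_right _ (mem_image.mpr ⟨⟨(j : ℕ), by omega⟩, ?_, Fin.ext rfl⟩)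
        refine mem_filter.mpr ⟨mem_univ _, ?_⟩
        have h5 : ((u ⟨(j : ℕ), by omega⟩ : ℝ) : EReal) ≤ t :=
          le_of_eq_of_le (hVpos j h1).symm hVj
        exact EReal.coe_lt_coe_iff.mp (h5.trans_lt ht')
      · rcases lt_or_ge (j : ℕ) (n1 + n0) with h2 | h2
        · exact mem_union_left _ (mem_filter.mpr ⟨mem_univ _, h1, h2⟩)
        · exfalso
          rw [hVtop j h2] at hVj
          exact absurd ((hVj.trans_lt ht').trans (EReal.coe_lt_top _)) (lt_irrefl _)
    have hGC : (C.image (Fin.castLE hcle)).card = C.card :=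
      Finset.card_image_of_injective _ (Fin.castLE_injective _)
    have hc := Finset.card_le_card hFsub
    have hZG := Finset.card_union_le Z (C.image (Fin.castLE hcle))
    omega


noncomputable def cnt (n : ℕ) (j : Fin (n + 1)) (u : Fin (n + 1) → ℝ) : ℕ :=
  (univ.filter fun i => u i < u j).card

lemma measurable_cnt (n : ℕ) (j : Fin (n + 1)) : Measurable (cnt n j) := by
  have h : cnt n j = fun u => ∑ i : Fin (n + 1), if u i < u j then 1 else 0 := by
    funext u
    rw [cnt, Finset.card_filter]
  rw [h]
  exact Finset.measurable_sum _ (fun i _ =>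
    Measurable.ite (measurableSet_lt (measurable_pi_apply i) (measurable_pi_apply j))
      measurable_const measurable_const)

lemma cnt_le (n : ℕ) (j : Fin (n + 1)) (u : Fin (n + 1) → ℝ) : cnt n j u ≤ n := by
  have : (univ.filter fun i => u i < u j) ⊆ univ.erase j := by
    intro i hi
    refine mem_erase.mpr ⟨?_, mem_univ _⟩
    intro h
    rw [h] at hi
    exact lt_irrefl _ (mem_filter.mp hi).2
  have := Finset.card_le_card this
  simpa [cnt, Finset.card_erase_of_mem] using this

lemma cnt_lt_cnt (n : ℕ) (u : Fin (n + 1) → ℝ) {j j' : Fin (n + 1)}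
    (h : u j < u j') : cnt n j u < cnt n j' u := by
  apply Finset.card_lt_card
  constructor
  · intro i hi
    exact mem_filter.mpr ⟨mem_univ _, (mem_filter.mp hi).2.trans h⟩
  · intro hsub
    have : j ∈ univ.filter fun i => u i < u j' := mem_filter.mpr ⟨mem_univ _, h⟩
    have := (mem_filter.mp (hsub this)).2
    exact lt_irrefl _ this

lemma cnt_inj (n : ℕ) (u : Fin (n + 1) → ℝ) (hinj : Function.Injective u) :
    Function.Injective (fun j : Fin (n + 1) => cnt n j u) := by
  intro a b h
  by_contra hab
  have : u a ≠ u b := fun he => hab (hinj he)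
  rcases this.lt_or_gt with h1 | h1
  · exact absurd h (Nat.ne_of_lt (cnt_lt_cnt n u h1))
  · exact absurd h.symm (Nat.ne_of_lt (cnt_lt_cnt n u h1))

lemma cnt_surj (n : ℕ) (u : Fin (n + 1) → ℝ) (hinj : Function.Injective u)
    (r : ℕ) (hr : r ≤ n) : ∃ j, cnt n j u = r := by
  have hbij : Function.Bijective
      (fun j : Fin (n + 1) => (⟨cnt n j u, Nat.lt_succ_of_le (cnt_le n j u)⟩ : Fin (n + 1))) := by
    rw [Fintype.bijective_iff_injective_and_card]
    refine ⟨?_, rfl⟩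
    intro a b h
    exact cnt_inj n u hinj (congrArg Fin.val h)
  obtain ⟨j, hj⟩ := hbij.2 (⟨r, Nat.lt_succ_of_le hr⟩ : Fin (n + 1))
  exact ⟨j, congrArg Fin.val hj⟩

lemma cnt_comp (n : ℕ) (σ : Equiv.Perm (Fin (n + 1))) (j : Fin (n + 1))
    (u : Fin (n + 1) → ℝ) : cnt n j (u ∘ σ) = cnt n (σ j) u := by
  unfold cnt
  apply Finset.card_bij (fun i _ => σ i)
  · intro a ha
    exact mem_filter.mpr ⟨mem_univ _, (mem_filter.mp ha).2⟩
  · intro a _ b _ h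
    exact σ.injective h
  · intro b hb
    refine ⟨σ.symm b, ?_, by simp⟩
    refine mem_filter.mpr ⟨mem_univ _, ?_⟩
    have := (mem_filter.mp hb).2
    simpa using this

lemma perm_pres (n : ℕ) (ν : Measure ℝ) [IsProbabilityMeasure ν]
    (σ : Equiv.Perm (Fin n)) :
    MeasurePreserving (fun u : Fin n → ℝ => u ∘ σ)
      (Measure.pi fun _ => ν) (Measure.pi fun _ => ν) := by
  have hmeas : Measurable (fun u : Fin n → ℝ => u ∘ σ) :=
    measurable_pi_lambda _ (fun i => measurable_pi_apply (σ i))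
  refine ⟨hmeas, ?_⟩
  refine (Measure.pi_eq fun s hs => ?_).symm
  rw [Measure.map_apply hmeas (MeasurableSet.univ_pi hs)]
  have hpre : (fun u : Fin n → ℝ => u ∘ σ) ⁻¹' (Set.univ.pi s)
      = Set.univ.pi (fun i => s (σ.symm i)) := by
    ext u
    simp only [Set.mem_preimage, Set.mem_pi, Set.mem_univ, true_implies, Function.comp]
    constructor
    · intro h i
      have := h (σ.symm i)
      simpa using this
    · intro h i
      have := h (σ i)
      simpa using this
  rw [hpre, Measure.pi_pi]
  exact Equiv.prod_comp σ.symm fun i => ν (s i)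

lemma measurable_injSet (n : ℕ) :
    MeasurableSet {u : Fin (n + 1) → ℝ | Function.Injective u} := by
  have heq : {u : Fin (n + 1) → ℝ | Function.Injective u}
      = ⋂ (a : Fin (n + 1)), ⋂ (b : Fin (n + 1)),
          {u : Fin (n + 1) → ℝ | a ≠ b → u a ≠ u b} := by
    ext u
    simp only [Set.mem_setOf_eq, Set.mem_iInter]
    constructor
    · intro h a b hab he
      exact hab (h he)
    · intro h a b he
      by_contra hab
      exact h a b hab he
  rw [heq]
  refine MeasurableSet.iInter fun a => MeasurableSet.iInter fun b => ?_
  by_cases hab : a = b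
  · subst hab
    have : {u : Fin (n + 1) → ℝ | a ≠ a → u a ≠ u a} = Set.univ := by
      ext u; simp
    rw [this]; exact MeasurableSet.univ
  · have : {u : Fin (n + 1) → ℝ | a ≠ b → u a ≠ u b}
        = {u : Fin (n + 1) → ℝ | u a = u b}ᶜ := by
      ext u; simp [hab]
    rw [this]
    exact (measurableSet_eq_fun (measurable_pi_apply a) (measurable_pi_apply b)).compl

lemma rank_unif (n : ℕ) (ν : Measure ℝ) [IsProbabilityMeasure ν]
    (hD : (Measure.pi fun _ : Fin (n + 1) => ν) {u | ¬ Function.Injective u} = 0)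
    (r : ℕ) (hr : r ≤ n) :
    (Measure.pi fun _ : Fin (n + 1) => ν) {u | cnt n (Fin.last n) u = r}
      = ((n : ℝ≥0∞) + 1)⁻¹ := by
  set Pm : Measure (Fin (n + 1) → ℝ) := Measure.pi fun _ => ν with hPmdef
  set D : Set (Fin (n + 1) → ℝ) := {u | Function.Injective u} with hDdef
  have hDc : Pm Dᶜ = 0 := by
    have : Dᶜ = {u : Fin (n + 1) → ℝ | ¬ Function.Injective u} := rfl
    rw [this]; exact hD
  set Cs : Fin (n + 1) → Set (Fin (n + 1) → ℝ) := fun j => {u | cnt n j u = r} with hCdef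
  have hCmeas : ∀ j, MeasurableSet (Cs j) := fun j =>
    measurable_cnt n j (measurableSet_singleton r)
  -- all slots have equal probability
  have hswap : ∀ j, Pm (Cs j) = Pm (Cs (Fin.last n)) := by
    intro j
    set σ : Equiv.Perm (Fin (n + 1)) := Equiv.swap j (Fin.last n) with hσdef
    have hT := perm_pres (n + 1) ν σ
    have hpre : (fun u : Fin (n + 1) → ℝ => u ∘ σ) ⁻¹' (Cs j) = Cs (Fin.last n) := by
      ext u
      simp only [Set.mem_preimage, hCdef, Set.mem_setOf_eq]
      rw [cnt_comp]
      rw [hσdef, Equiv.swap_apply_left]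
    rw [← hT.measure_preimage (hCmeas j).nullMeasurableSet, hpre]
  -- the events partition D
  have hdisj : Set.PairwiseDisjoint ((univ : Finset (Fin (n + 1))) : Set (Fin (n + 1)))
      (fun j => Cs j ∩ D) := by
    intro a _ b _ hab
    refine Set.disjoint_left.mpr ?_
    rintro u ⟨hua, huD⟩ ⟨hub, -⟩
    exact hab (cnt_inj n u huD (hua.trans hub.symm))
  have hcover : ⋃ j ∈ (univ : Finset (Fin (n + 1))), (Cs j ∩ D) = D := by
    apply Set.Subset.antisymm
    · intro u hu
      simp only [Set.mem_iUnion] at hu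
      obtain ⟨j, -, -, huD⟩ := hu
      exact huD
    · intro u huD
      obtain ⟨j, hj⟩ := cnt_surj n u huD r hr
      simp only [Set.mem_iUnion]
      exact ⟨j, mem_univ j, hj, huD⟩
  have hDmeas : MeasurableSet D := measurable_injSet n
  have hsum : ∑ j : Fin (n + 1), Pm (Cs j ∩ D) = Pm D := by
    rw [← measure_biUnion_finset hdisj (fun j _ => (hCmeas j).inter hDmeas), hcover]
  have hterm : ∀ j, Pm (Cs j ∩ D) = Pm (Cs (Fin.last n)) := fun j =>
    (measure_inter_conull hDc).trans (hswap j)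
  have hDone : Pm D = 1 := by
    have := measure_inter_conull (s := Set.univ) (μ := Pm) hDc
    rw [Set.univ_inter] at this
    rw [this, measure_univ]
  rw [hDone] at hsum
  have hsum2 : ((n : ℝ≥0∞) + 1) * Pm (Cs (Fin.last n)) = 1 := by
    calc ((n : ℝ≥0∞) + 1) * Pm (Cs (Fin.last n))
        = ∑ j : Fin (n + 1), Pm (Cs j ∩ D) := by
          rw [Finset.sum_congr rfl (fun j _ => hterm j), Finset.sum_const, card_univ,
            Fintype.card_fin, nsmul_eq_mul, Nat.cast_add, Nat.cast_one]
      _ = 1 := hsum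
  have hne : ((n : ℝ≥0∞) + 1) ≠ 0 := by simp
  have hnetop : ((n : ℝ≥0∞) + 1) ≠ ⊤ := by
    simp [ENNReal.natCast_ne_top]
  calc Pm (Cs (Fin.last n)) = (((n : ℝ≥0∞) + 1)⁻¹ * ((n : ℝ≥0∞) + 1)) * Pm (Cs (Fin.last n)) := by
        rw [ENNReal.inv_mul_cancel hne hnetop, one_mul]
    _ = ((n : ℝ≥0∞) + 1)⁻¹ * (((n : ℝ≥0∞) + 1) * Pm (Cs (Fin.last n))) := by ring
    _ = ((n : ℝ≥0∞) + 1)⁻¹ := by rw [hsum2, mul_one]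

lemma rank_lt (n k : ℕ) (hk : k ≤ n + 1) (ν : Measure ℝ) [IsProbabilityMeasure ν]
    (hD : (Measure.pi fun _ : Fin (n + 1) => ν) {u | ¬ Function.Injective u} = 0) :
    (Measure.pi fun _ : Fin (n + 1) => ν) {u | cnt n (Fin.last n) u < k}
      = (k : ℝ≥0∞) * ((n : ℝ≥0∞) + 1)⁻¹ := by
  have heq : {u : Fin (n + 1) → ℝ | cnt n (Fin.last n) u < k}
      = ⋃ r ∈ Finset.range k, {u | cnt n (Fin.last n) u = r} := by
    ext u
    simp only [Set.mem_setOf_eq, Set.mem_iUnion, Finset.mem_range]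
    constructor
    · intro h; exact ⟨_, h, rfl⟩
    · rintro ⟨r, hr, h⟩; omega
  rw [heq, measure_biUnion_finset]
  · rw [Finset.sum_congr rfl (fun r hr => rank_unif n ν hD r (by
      have := Finset.mem_range.mp hr; omega))]
    rw [Finset.sum_const, Finset.card_range, nsmul_eq_mul]
  · intro a _ b _ hab
    refine Set.disjoint_left.mpr ?_
    rintro u ha hb
    exact hab (ha.symm.trans hb)
  · intro r _
    exact measurable_cnt n (Fin.last n) (measurableSet_singleton r)

/-- Conditional coverage computation of Proposition 2: with `n₁` i.i.d. positive continuous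
scores, `n₀` scores equal to `0`, and a point mass at `+∞`, an independent copy `V_new` is
covered by the level-`α` quantile with probability exactly
`(⌈(n₀+n₁+1)α⌉ - n₀)/(n₁+1)`, which is at most
`1/(n₁+1) + ((n₀+n₁+1)/(n₁+1))(α - n₀/(n₀+n₁+1))`. -/
theorem stmt14 {Ω : Type*} [MeasurableSpace Ω] (μ : Measure Ω) [IsProbabilityMeasure μ]
    (n0 n1 : ℕ) (α : ℝ) (hα : α ∈ Set.Ioo (0 : ℝ) 1)
    (hαlb : (n0 : ℝ) / ((n0 : ℝ) + n1 + 1) < α)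
    (ν : Measure ℝ) [IsProbabilityMeasure ν]
    (hcont : ∀ x : ℝ, ν {x} = 0) (hpos : ν (Set.Iic (0 : ℝ)) = 0)
    (U : Fin (n1 + 1) → Ω → ℝ) (hmeas : ∀ i, Measurable (U i))
    (hindep : iIndepFun U μ)
    (hlaw : ∀ i, Measure.map (U i) μ = ν) :
    μ {ω | (U (Fin.last n1) ω : EReal) ≤
        equantile (fun _ : Fin (n1 + n0 + 1) => 1 / ((n0 : ℝ) + n1 + 1))
          (fun j : Fin (n1 + n0 + 1) =>
            if hj : (j : ℕ) < n1 then ((U ⟨j, by omega⟩ ω : ℝ) : EReal)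
            else if (j : ℕ) < n1 + n0 then ((0 : ℝ) : EReal) else (⊤ : EReal)) α}
      = ENNReal.ofReal
          (((⌈((n0 : ℝ) + n1 + 1) * α⌉ : ℤ) - (n0 : ℝ)) / ((n1 : ℝ) + 1)) ∧
    ((⌈((n0 : ℝ) + n1 + 1) * α⌉ : ℤ) - (n0 : ℝ)) / ((n1 : ℝ) + 1) ≤
      1 / ((n1 : ℝ) + 1) +
        (((n0 : ℝ) + n1 + 1) / ((n1 : ℝ) + 1)) * (α - (n0 : ℝ) / ((n0 : ℝ) + n1 + 1)) := by
  obtain ⟨hα0, hα1⟩ := hα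
  set N : ℝ := (n0 : ℝ) + n1 + 1 with hNdef
  have hN : (0 : ℝ) < N := by positivity
  have hn1pos : (0 : ℝ) < (n1 : ℝ) + 1 := by positivity
  have hNα : (n0 : ℝ) < N * α := by
    rw [div_lt_iff₀ hN] at hαlb; linarith
  have hceil_ge : (n0 : ℤ) + 1 ≤ ⌈N * α⌉ := by
    have := Int.lt_ceil.mpr (show ((n0 : ℤ) : ℝ) < N * α by exact_mod_cast hNα)
    omega
  have hceil_le : ⌈N * α⌉ ≤ (n0 : ℤ) + n1 + 1 := by
    apply Int.ceil_le.mpr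
    push_cast
    nlinarith
  set m : ℕ := (⌈N * α⌉).toNat with hmdef
  have hm : (m : ℤ) = ⌈N * α⌉ := Int.toNat_of_nonneg (by omega)
  have hm1 : n0 + 1 ≤ m := by omega
  have hm2 : m ≤ n0 + n1 + 1 := by omega
  set K : ℕ := m - n0 with hKdef
  -- the inequality part
  have hineq : ((⌈N * α⌉ : ℤ) - (n0 : ℝ)) / ((n1 : ℝ) + 1) ≤
      1 / ((n1 : ℝ) + 1) + (N / ((n1 : ℝ) + 1)) * (α - (n0 : ℝ) / N) := by
    have key : ((⌈N * α⌉ : ℤ) : ℝ) ≤ N * α + 1 := le_of_lt (Int.ceil_lt_add_one _)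
    have h2 : 1 / ((n1 : ℝ) + 1) + (N / ((n1 : ℝ) + 1)) * (α - (n0 : ℝ) / N)
        = (N * α - n0 + 1) / ((n1 : ℝ) + 1) := by
      field_simp
      ring
    rw [h2, div_le_div_iff₀ hn1pos hn1pos]
    nlinarith
  refine ⟨?_, hineq⟩
  -- the probability computation
  set W : Ω → (Fin (n1 + 1) → ℝ) := fun ω i => U i ω with hWdef
  have hW : Measurable W := measurable_pi_lambda _ hmeas
  have hmap : Measure.map W μ = Measure.pi (fun _ : Fin (n1 + 1) => ν) := by
    refine (Measure.pi_eq fun s hs => ?_).symm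
    rw [Measure.map_apply hW (MeasurableSet.univ_pi hs)]
    have hpre : W ⁻¹' (Set.univ.pi s) = ⋂ i, U i ⁻¹' s i := by
      ext ω
      simp [Set.mem_pi, hWdef]
    rw [hpre, hindep.meas_iInter (fun i => ⟨s i, hs i, rfl⟩)]
    exact Finset.prod_congr rfl fun i _ => by
      rw [← hlaw i, Measure.map_apply (hmeas i) (hs i)]
  have hbadpos : ∀ i, μ {ω | U i ω ≤ 0} = 0 := by
    intro i
    have : {ω | U i ω ≤ 0} = U i ⁻¹' Set.Iic 0 := rfl
    rw [this, ← Measure.map_apply (hmeas i) measurableSet_Iic, hlaw i]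
    exact hpos
  have hbadeq : ∀ i j : Fin (n1 + 1), i ≠ j → μ {ω | U i ω = U j ω} = 0 := by
    intro i j hij
    have hind := hindep.indepFun hij
    have hjoint := (indepFun_iff_map_prod_eq_prod_map_map
      (hmeas i).aemeasurable (hmeas j).aemeasurable).mp hind
    have hdiagmeas : MeasurableSet {p : ℝ × ℝ | p.1 = p.2} :=
      measurableSet_eq_fun measurable_fst measurable_snd
    have : {ω | U i ω = U j ω} = (fun ω => (U i ω, U j ω)) ⁻¹' {p : ℝ × ℝ | p.1 = p.2} := rfl
    rw [this, ← Measure.map_apply ((hmeas i).prodMk (hmeas j)) hdiagmeas, hjoint,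
      hlaw i, hlaw j, Measure.prod_apply hdiagmeas]
    have hfib : ∀ x : ℝ, ν (Prod.mk x ⁻¹' {p : ℝ × ℝ | p.1 = p.2}) = 0 := by
      intro x
      have : Prod.mk x ⁻¹' {p : ℝ × ℝ | p.1 = p.2} = {x} := by
        ext y
        simp [eq_comm]
      rw [this]
      exact hcont x
    rw [lintegral_congr hfib, lintegral_zero]
  set Bad : Set Ω := {ω | ¬ ((∀ i, 0 < U i ω) ∧ Function.Injective (W ω))} with hBaddef
  have hBadnull : μ Bad = 0 := by
    have hsub : Bad ⊆ (⋃ i, {ω | U i ω ≤ 0}) ∪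
        (⋃ p : Fin (n1 + 1) × Fin (n1 + 1), {ω | p.1 ≠ p.2 ∧ U p.1 ω = U p.2 ω}) := by
      intro ω hω
      simp only [hBaddef, Set.mem_setOf_eq, not_and_or] at hω
      rcases hω with h | h
      · left
        push_neg at h
        obtain ⟨i, hi⟩ := h
        exact Set.mem_iUnion.mpr ⟨i, hi⟩
      · right
        rw [Function.not_injective_iff] at h
        obtain ⟨a, b, hab, hne⟩ := h
        exact Set.mem_iUnion.mpr ⟨(a, b), hne, hab⟩
    apply measure_mono_null hsub
    apply measure_union_null
    · exact measure_iUnion_null hbadpos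
    · apply measure_iUnion_null
      intro p
      by_cases hp : p.1 = p.2
      · have : {ω | p.1 ≠ p.2 ∧ U p.1 ω = U p.2 ω} = ∅ := by
          ext ω; simp [hp]
        rw [this]; exact measure_empty
      · exact measure_mono_null (fun ω hω => hω.2) (hbadeq p.1 p.2 hp)
  have hπbad : (Measure.pi fun _ : Fin (n1 + 1) => ν) {u | ¬ Function.Injective u} = 0 := by
    rw [← hmap, Measure.map_apply hW (show MeasurableSet {u : Fin (n1 + 1) → ℝ | ¬ Function.Injective u} from (measurable_injSet n1).compl)]
    apply measure_mono_null _ hBadnull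
    intro ω hω
    simp only [Set.mem_preimage, Set.mem_compl_iff, Set.mem_setOf_eq] at hω
    simp only [hBaddef, Set.mem_setOf_eq, not_and_or]
    right
    exact hω
  -- transfer the event
  have hmain : μ {ω | (U (Fin.last n1) ω : EReal) ≤
      equantile (fun _ : Fin (n1 + n0 + 1) => 1 / ((n0 : ℝ) + n1 + 1))
        (fun j : Fin (n1 + n0 + 1) =>
          if hj : (j : ℕ) < n1 then ((U ⟨j, by omega⟩ ω : ℝ) : EReal)
          else if (j : ℕ) < n1 + n0 then ((0 : ℝ) : EReal) else (⊤ : EReal)) α}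
      = (K : ℝ≥0∞) * ((n1 : ℝ≥0∞) + 1)⁻¹ := by
    set E : Set Ω := {ω | (U (Fin.last n1) ω : EReal) ≤
      equantile (fun _ : Fin (n1 + n0 + 1) => 1 / ((n0 : ℝ) + n1 + 1))
        (fun j : Fin (n1 + n0 + 1) =>
          if hj : (j : ℕ) < n1 then ((U ⟨j, by omega⟩ ω : ℝ) : EReal)
          else if (j : ℕ) < n1 + n0 then ((0 : ℝ) : EReal) else (⊤ : EReal)) α} with hEdef
    set F : Set Ω := {ω | cnt n1 (Fin.last n1) (W ω) < K} with hFdef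
    have hEF : E ∩ Badᶜ = F ∩ Badᶜ := by
      ext ω
      simp only [Set.mem_inter_iff, Set.mem_compl_iff, hBaddef, Set.mem_setOf_eq, not_not]
      constructor
      · rintro ⟨hE, hG⟩
        refine ⟨?_, hG⟩
        have := (claimA n0 n1 α hα1 hαlb (W ω) hG.1 hG.2).mp hE
        exact this
      · rintro ⟨hF, hG⟩
        refine ⟨?_, hG⟩
        exact (claimA n0 n1 α hα1 hαlb (W ω) hG.1 hG.2).mpr hF
    have hBadc : μ (Badᶜ)ᶜ = 0 := by rw [compl_compl]; exact hBadnull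
    calc μ E = μ (E ∩ Badᶜ) := (measure_inter_conull hBadc).symm
      _ = μ (F ∩ Badᶜ) := by rw [hEF]
      _ = μ F := measure_inter_conull hBadc
      _ = (Measure.map W μ) {u | cnt n1 (Fin.last n1) u < K} := by
          rw [Measure.map_apply hW]
          · rfl
          · exact measurable_cnt n1 (Fin.last n1)
              (by exact measurableSet_lt measurable_id measurable_const :
                MeasurableSet {c : ℕ | c < K})
      _ = (K : ℝ≥0∞) * ((n1 : ℝ≥0∞) + 1)⁻¹ := by
          rw [hmap]
          exact rank_lt n1 K (by omega) ν hπbad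
  rw [hmain]
  have hKreal : ((⌈N * α⌉ : ℤ) : ℝ) - (n0 : ℝ) = (K : ℝ) := by
    have : (K : ℤ) = ⌈N * α⌉ - n0 := by omega
    have := congrArg (Int.cast : ℤ → ℝ) this
    push_cast at this
    linarith
  rw [hKreal]
  rw [ENNReal.ofReal_div_of_pos hn1pos, div_eq_mul_inv]
  congr 1
  · exact (ENNReal.ofReal_natCast K).symm
  · congr 1
    rw [show (n1 : ℝ) + 1 = ((n1 + 1 : ℕ) : ℝ) by push_cast; ring,
      ENNReal.ofReal_natCast]
    push_cast
    ring
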